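/- Let c be a positive natural number, let w be a Gauss word of length 2c, and let x be an assignment. Then for every b : Fin (2c), |d_{b+1}(x) − d_b(x)| = 1, where the index b+1 is taken mod 2c (so in particular the first and last entries of the warping degree sequence also differ by exactly 1). This is property (i) of the warping matrix: consecutive entries of each row differ by exactly one, cyclically. -/
import Mathlib


namespace Warping

/-- A Gauss word of length `2c`: every letter occurs at exactly two positions. -/
def IsGaussWord (c : ℕ) (w : Fin (2*c) → Fin c) : Prop :=
  ∀ i : Fin c, (Finset.univ.filter (fun j => w j = i)).card = 2

/-- The cyclic successor of an index. -/
def next {n : ℕ} (b : Fin n) : Fin n :=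
  ⟨((b : ℕ) + 1) % n, Nat.mod_lt _ (Nat.lt_of_le_of_lt (Nat.zero_le _) b.isLt)⟩

/-- `j` is the first (smaller) of the two positions of its letter. -/
def isFirst (c : ℕ) (w : Fin (2*c) → Fin c) (j : Fin (2*c)) : Prop :=
  ∀ j' : Fin (2*c), w j' = w j → j ≤ j'

/-- Under the assignment `x`, position `j` is passed under. -/
def passedUnder (c : ℕ) (w : Fin (2*c) → Fin c) (x : Fin c → Bool) (j : Fin (2*c)) : Prop :=
  (x (w j) = true) ↔ isFirst c w j

/-- Time at which position `j` is met in the cyclic traversal starting at base `b`. -/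
def time (c : ℕ) (b j : Fin (2*c)) : ℕ := ((j : ℕ) + 2*c - (b : ℕ)) % (2*c)

/-- The letter `i` is a warping crossing for assignment `x` and base `b`: the position of `i`
met earlier in the cyclic traversal starting at `b` is passed under. -/
def IsWarpingCrossing (c : ℕ) (w : Fin (2*c) → Fin c) (x : Fin c → Bool)
    (b : Fin (2*c)) (i : Fin c) : Prop :=
  ∃ j : Fin (2*c), w j = i ∧ (∀ j' : Fin (2*c), w j' = i → time c b j ≤ time c b j') ∧
    passedUnder c w x j

open scoped Classical in
/-- The warping degree of the assignment `x` with base point `b`. -/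
noncomputable def warpingDegree (c : ℕ) (w : Fin (2*c) → Fin c) (x : Fin c → Bool)
    (b : Fin (2*c)) : ℕ :=
  (Finset.univ.filter (fun i => IsWarpingCrossing c w x b i)).card

/-- The step `d_{b+1}(x) - d_b(x)` of the warping degree sequence. -/
noncomputable def step (c : ℕ) (w : Fin (2*c) → Fin c) (x : Fin c → Bool) (b : Fin (2*c)) : ℤ :=
  (warpingDegree c w x (next b) : ℤ) - (warpingDegree c w x b : ℤ)

private lemma mod2 {n a : ℕ} (h : a < 2*n) :
    (a < n ∧ a % n = a) ∨ (n ≤ a ∧ a % n = a - n) := by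
  rcases Nat.lt_or_ge a n with h1 | h1
  · exact Or.inl ⟨h1, Nat.mod_eq_of_lt h1⟩
  · exact Or.inr ⟨h1, by rw [Nat.mod_eq_sub_mod h1, Nat.mod_eq_of_lt (by omega)]⟩

lemma time_lt {c : ℕ} (hc : 0 < c) (b j : Fin (2*c)) : time c b j < 2*c := by
  unfold time
  exact Nat.mod_lt _ (by omega)

lemma time_self {c : ℕ} (hc : 0 < c) (b : Fin (2*c)) : time c b b = 0 := by
  unfold time
  have hb := b.isLt
  rcases mod2 (n := 2*c) (a := (b:ℕ)+2*c-(b:ℕ)) (by omega) with h|h <;> omega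

lemma time_inj {c : ℕ} (hc : 0 < c) (b j j' : Fin (2*c)) (h : time c b j = time c b j') :
    j = j' := by
  unfold time at h
  have hb := b.isLt; have hj := j.isLt; have hj' := j'.isLt
  apply Fin.ext
  rcases mod2 (n := 2*c) (a := (j:ℕ)+2*c-(b:ℕ)) (by omega) with h1|h1 <;>
  rcases mod2 (n := 2*c) (a := (j':ℕ)+2*c-(b:ℕ)) (by omega) with h2|h2 <;> omega

lemma time_next_self {c : ℕ} (hc : 0 < c) (b : Fin (2*c)) : time c (next b) b = 2*c - 1 := by
  have hb := b.isLt
  show ((b : ℕ) + 2*c - (((b:ℕ)+1) % (2*c))) % (2*c) = 2*c - 1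
  have hk := mod2 (n := 2*c) (a := (b:ℕ)+1) (by omega)
  set k := ((b:ℕ)+1) % (2*c) with hkdef
  have hk2 : k ≤ 2*c := by omega
  rcases mod2 (n := 2*c) (a := (b:ℕ)+2*c-k) (by omega) with h|h <;> omega

lemma time_next {c : ℕ} (hc : 0 < c) (b j : Fin (2*c)) (h : j ≠ b) :
    time c (next b) j + 1 = time c b j := by
  have hb := b.isLt; have hj := j.isLt
  have hv : (j : ℕ) ≠ (b : ℕ) := fun hv => h (Fin.ext hv)
  show ((j : ℕ) + 2*c - (((b:ℕ)+1) % (2*c))) % (2*c) + 1 = ((j:ℕ) + 2*c - (b:ℕ)) % (2*c)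
  have hk := mod2 (n := 2*c) (a := (b:ℕ)+1) (by omega)
  set k := ((b:ℕ)+1) % (2*c) with hkdef
  have hk2 : k ≤ 2*c := by omega
  rcases mod2 (n := 2*c) (a := (j:ℕ)+2*c-k) (by omega) with h1|h1 <;>
  rcases mod2 (n := 2*c) (a := (j:ℕ)+2*c-(b:ℕ)) (by omega) with h2|h2 <;> omega

/-- Property (i) of the warping matrix: cyclically consecutive entries of each row of the
warping matrix differ by exactly one. -/
theorem abs_warpingDegree_sub_next (c : ℕ) (hc : 0 < c) (w : Fin (2*c) → Fin c)
    (hw : IsGaussWord c w) (x : Fin c → Bool) :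
    ∀ b : Fin (2*c),
      |(warpingDegree c w x (next b) : ℤ) - (warpingDegree c w x b : ℤ)| = 1 := by
  intro b
  classical
  have hcard := hw (w b)
  have hbmem : b ∈ Finset.univ.filter (fun j => w j = w b) := by simp
  obtain ⟨j₀, hj₀mem, hj₀ne⟩ :=
    Finset.exists_mem_ne (s := Finset.univ.filter (fun j => w j = w b))
      (by omega) b
  have hwj₀ : w j₀ = w b := by simpa using hj₀mem
  -- the positions of the letter `w b` are exactly `b` and `j₀`
  have hpos : ∀ j', w j' = w b → j' = b ∨ j' = j₀ := by
    intro j' hj'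
    have hsub : ({b, j₀} : Finset (Fin (2*c))) ⊆
        Finset.univ.filter (fun j => w j = w b) := by
      intro a ha
      simp only [Finset.mem_insert, Finset.mem_singleton] at ha
      rcases ha with rfl | rfl <;> simp [hwj₀]
    have hc2 : ({b, j₀} : Finset (Fin (2*c))).card = 2 :=
      Finset.card_pair (Ne.symm hj₀ne)
    have heq := Finset.eq_of_subset_of_card_le hsub (by rw [hcard, hc2])
    have : j' ∈ ({b, j₀} : Finset (Fin (2*c))) := by
      rw [heq]; simp [hj']
    simpa using this
  -- first-position facts
  have hfb : isFirst c w b ↔ b ≤ j₀ := by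
    constructor
    · intro h; exact h j₀ hwj₀
    · intro h j' hj'
      rcases hpos j' hj' with rfl | rfl
      · exact le_refl _
      · exact h
  have hfj : isFirst c w j₀ ↔ j₀ ≤ b := by
    constructor
    · intro h; exact h b (by rw [hwj₀])
    · intro h j' hj'
      rw [hwj₀] at hj'
      rcases hpos j' hj' with rfl | rfl
      · exact h
      · exact le_refl _
  -- exactly one of b, j₀ is passed under
  have hx4 : passedUnder c w x b ↔ ¬ passedUnder c w x j₀ := by
    unfold passedUnder
    rw [hwj₀, hfb, hfj, Fin.le_def, Fin.le_def]
    have hv : (b : ℕ) ≠ (j₀ : ℕ) := fun hv => hj₀ne (Fin.ext hv.symm)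
    cases hx : x (w b) <;> simp [hx] <;> omega
  -- crossing characterizations
  have X1 : IsWarpingCrossing c w x b (w b) ↔ passedUnder c w x b := by
    constructor
    · rintro ⟨j, hj, hmin, hpu⟩
      have h0 : time c b j = 0 := by
        have := hmin b rfl
        rw [time_self hc] at this
        omega
      have hjb : j = b := time_inj hc b j b (by rw [h0, time_self hc])
      rwa [hjb] at hpu
    · intro h
      exact ⟨b, rfl, fun j' _ => by rw [time_self hc]; omega, h⟩
  have X2 : IsWarpingCrossing c w x (next b) (w b) ↔ passedUnder c w x j₀ := by
    constructor
    · rintro ⟨j, hj, hmin, hpu⟩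
      rcases hpos j hj with hjb | hjb
      · exfalso
        have h1 := hmin j₀ hwj₀
        rw [hjb, time_next_self hc] at h1
        have h2 := time_lt hc (next b) j₀
        have heq : time c (next b) j₀ = time c (next b) b := by
          rw [time_next_self hc]; omega
        exact hj₀ne (time_inj hc (next b) j₀ b heq)
      · exact hjb ▸ hpu
    · intro h
      refine ⟨j₀, hwj₀, ?_, h⟩
      intro j' hj'
      rcases hpos j' hj' with hjb | hjb
      · rw [hjb, time_next_self hc]
        have := time_lt hc (next b) j₀
        omega
      · rw [hjb]
  have X3 : ∀ i, i ≠ w b →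
      (IsWarpingCrossing c w x (next b) i ↔ IsWarpingCrossing c w x b i) := by
    intro i hi
    have hnb : ∀ j : Fin (2*c), w j = i → j ≠ b := by
      rintro j hj rfl; exact hi hj.symm
    constructor
    · rintro ⟨j, hj, hmin, hpu⟩
      refine ⟨j, hj, fun j' hj' => ?_, hpu⟩
      have h1 := time_next hc b j (hnb j hj)
      have h2 := time_next hc b j' (hnb j' hj')
      have := hmin j' hj'
      omega
    · rintro ⟨j, hj, hmin, hpu⟩
      refine ⟨j, hj, fun j' hj' => ?_, hpu⟩
      have h1 := time_next hc b j (hnb j hj)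
      have h2 := time_next hc b j' (hnb j' hj')
      have := hmin j' hj'
      omega
  -- counting
  unfold warpingDegree
  by_cases hb : IsWarpingCrossing c w x b (w b)
  · have hnext : ¬ IsWarpingCrossing c w x (next b) (w b) := by
      rw [X2]
      exact hx4.mp (X1.mp hb)
    have hset : (Finset.univ.filter (fun i => IsWarpingCrossing c w x (next b) i))
        = (Finset.univ.filter (fun i => IsWarpingCrossing c w x b i)).erase (w b) := by
      ext i
      simp only [Finset.mem_erase, Finset.mem_filter, Finset.mem_univ, true_and]
      by_cases hii : i = w b
      · subst hii; simp [hnext]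
      · rw [X3 i hii]; simp [hii]
    rw [hset, Finset.card_erase_of_mem (by simp [hb])]
    have hpos1 : 1 ≤ (Finset.univ.filter (fun i => IsWarpingCrossing c w x b i)).card :=
      Finset.card_pos.mpr ⟨w b, by simp [hb]⟩
    have key : (((Finset.univ.filter (fun i => IsWarpingCrossing c w x b i)).card - 1 : ℕ) : ℤ)
        - ((Finset.univ.filter (fun i => IsWarpingCrossing c w x b i)).card : ℤ) = -1 := by
      omega
    rw [key]; norm_num
  · have hnext : IsWarpingCrossing c w x (next b) (w b) := by
      rw [X2]
      by_contra h
      exact hb (X1.mpr (hx4.mpr h))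
    have hset : (Finset.univ.filter (fun i => IsWarpingCrossing c w x (next b) i))
        = insert (w b) (Finset.univ.filter (fun i => IsWarpingCrossing c w x b i)) := by
      ext i
      simp only [Finset.mem_insert, Finset.mem_filter, Finset.mem_univ, true_and]
      by_cases hii : i = w b
      · subst hii; simp [hnext]
      · rw [X3 i hii]; simp [hii]
    rw [hset, Finset.card_insert_of_notMem (by simp [hb])]
    push_cast
    simp

end Warping
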